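/- arXiv:1605.02281 — 3 statements merged into one kernel-verified Lean document; each statement's English description precedes it below -/
import Mathlib

section
/- The expected squared distance of X from the point (1/2, 3/4) equals 7/32, i.e., ∫ ‖x − (1/2, 3/4)‖² dP(x) = 7/32. -/
open MeasureTheory ProbabilityTheory
open scoped ENNReal

noncomputable section

abbrev E2 : Type := EuclideanSpace ℝ (Fin 2)

/-- The point (a,b) of the Euclidean plane. -/
def pt (a b : ℝ) : E2 := (WithLp.equiv 2 (Fin 2 → ℝ)).symm ![a, b]

/-- The four generating similarities S₁,…,S₄ (indexed 0,…,3) of the Sierpiński carpet. -/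
def S : Fin 4 → E2 → E2
  | 0 => fun x => pt (x 0 / 3) (x 1 / 3)
  | 1 => fun x => pt (x 0 / 3 + 2/3) (x 1 / 3)
  | 2 => fun x => pt (x 0 / 3) (x 1 / 3 + 2/3)
  | 3 => fun x => pt (x 0 / 3 + 2/3) (x 1 / 3 + 2/3)

/-- The self-affinity equation P = (1/8)P∘S₁⁻¹ + (1/8)P∘S₂⁻¹ + (3/8)P∘S₃⁻¹ + (3/8)P∘S₄⁻¹. -/
def carpetEq (P : Measure E2) : Prop :=
  P = (1/8 : ℝ≥0∞) • P.map (S 0) + (1/8 : ℝ≥0∞) • P.map (S 1)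
    + (3/8 : ℝ≥0∞) • P.map (S 2) + (3/8 : ℝ≥0∞) • P.map (S 3)

/-- The unit square [0,1]². -/
def unitSq : Set E2 := {x | ∀ i, x i ∈ Set.Icc (0:ℝ) 1}

/-- S_ω = S_{ω₁} ∘ ⋯ ∘ S_{ω_k} for a word ω. -/
def Sw (w : List (Fin 4)) : E2 → E2 := fun x => w.foldr S x

/-- The basic square J_ω = S_ω([0,1]²). -/
def Jw (w : List (Fin 4)) : Set E2 := Sw w '' unitSq

/-- The basic square J_i of the first level. -/
def Jset (i : Fin 4) : Set E2 := S i '' unitSq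

/-- The mass centroid (conditional expectation) of P on a set A. -/
def ctr (P : Measure E2) (A : Set E2) : E2 := (P A).toReal⁻¹ • ∫ x in A, x ∂P

/-- E(ω) : distortion error on J_ω about its centroid a(ω) = S_ω(1/2,3/4). -/
def Err (P : Measure E2) (w : List (Fin 4)) : ℝ :=
  ∫ x in Jw w, ‖x - Sw w (pt (1/2) (3/4))‖^2 ∂P

/-- E(ωi, ωj) : distortion error on J_{ωi} ∪ J_{ωj} about its centroid. -/
def Epair (P : Measure E2) (w : List (Fin 4)) (i j : Fin 4) : ℝ :=
  ∫ x in (Jw (w ++ [i]) ∪ Jw (w ++ [j])),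
    ‖x - ctr P (Jw (w ++ [i]) ∪ Jw (w ++ [j]))‖^2 ∂P

/-! ### Auxiliary lemmas -/

lemma norm_sq_eq (y : E2) : ‖y‖^2 = y 0^2 + y 1^2 := by
  rw [EuclideanSpace.norm_eq, Real.sq_sqrt (by positivity)]
  simp [Fin.sum_univ_two, sq_abs]

lemma measurable_S (i : Fin 4) : Measurable (S i) := by
  fin_cases i <;>
  · refine (WithLp.measurable_toLp 2 _).comp (measurable_pi_iff.mpr fun j => ?_)
    fin_cases j <;>
    · simp only [S, pt, Fin.mk_zero, Fin.mk_one, WithLp.equiv_symm_apply, PiLp.toLp_apply,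
        Matrix.cons_val_zero, Matrix.cons_val_one, Matrix.head_cons]
      fun_prop

lemma continuous_S (i : Fin 4) : Continuous (S i) := by
  fin_cases i <;>
  · refine (PiLp.continuous_toLp 2 _).comp (continuous_pi fun j => ?_)
    fin_cases j <;>
    · simp only [S, pt, Fin.mk_zero, Fin.mk_one, WithLp.equiv_symm_apply, PiLp.toLp_apply,
        Matrix.cons_val_zero, Matrix.cons_val_one, Matrix.head_cons]
      fun_prop

/-- The bad set: some coordinate outside [-R, 1+R]. -/
def Abad (R : ℝ) : Set E2 := {x | ∃ i, x i ∉ Set.Icc (-R) (1+R)}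

lemma measurable_Abad (R : ℝ) : MeasurableSet (Abad R) := by
  have : Abad R = ⋃ i, (fun x : E2 => x i) ⁻¹' (Set.Icc (-R) (1+R))ᶜ := by
    ext x; simp [Abad]
  rw [this]
  exact MeasurableSet.iUnion fun i => ((measurable_pi_apply i).comp (WithLp.measurable_ofLp 2 _)) measurableSet_Icc.compl

lemma preimage_Abad (i : Fin 4) (R : ℝ) (hR : 0 ≤ R) : S i ⁻¹' Abad R ⊆ Abad (3*R) := by
  intro x hx
  obtain ⟨j, hj⟩ := hx
  refine ⟨j, fun hmem => hj ?_⟩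
  rw [Set.mem_Icc] at hmem ⊢
  obtain ⟨h1, h2⟩ := hmem
  fin_cases i <;> fin_cases j <;>
  · simp only [S, pt, Fin.mk_zero, Fin.mk_one, WithLp.equiv_symm_apply, PiLp.toLp_apply,
      Matrix.cons_val_zero, Matrix.cons_val_one, Matrix.head_cons, Fin.isValue] at h1 h2 ⊢
    constructor <;> linarith

lemma antitone_Abad {R R' : ℝ} (h : R ≤ R') : Abad R' ⊆ Abad R := by
  intro x hx
  obtain ⟨j, hj⟩ := hx
  refine ⟨j, fun hmem => hj ?_⟩
  rw [Set.mem_Icc] at hmem ⊢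
  exact ⟨by linarith [hmem.1], by linarith [hmem.2]⟩

section main

variable (P : Measure E2) [IsProbabilityMeasure P]

lemma coeff_sum : (1/8 : ℝ≥0∞) + 1/8 + 3/8 + 3/8 = 1 := by
  rw [ENNReal.div_add_div_same, ENNReal.div_add_div_same, ENNReal.div_add_div_same]
  norm_num
  exact ENNReal.div_self (by norm_num) (by norm_num)

lemma step_Abad (hP : carpetEq P) (R : ℝ) (hR : 0 ≤ R) : P (Abad R) ≤ P (Abad (3*R)) := by
  conv_lhs => rw [hP]
  have hm := measurable_Abad R
  rw [Measure.add_apply, Measure.add_apply, Measure.add_apply, Measure.smul_apply,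
    Measure.smul_apply, Measure.smul_apply, Measure.smul_apply,
    Measure.map_apply (measurable_S 0) hm, Measure.map_apply (measurable_S 1) hm,
    Measure.map_apply (measurable_S 2) hm, Measure.map_apply (measurable_S 3) hm]
  have hle : ∀ i : Fin 4, P (S i ⁻¹' Abad R) ≤ P (Abad (3*R)) := fun i =>
    measure_mono (preimage_Abad i R hR)
  calc (1/8 : ℝ≥0∞) • P (S 0 ⁻¹' Abad R) + (1/8 : ℝ≥0∞) • P (S 1 ⁻¹' Abad R)
        + (3/8 : ℝ≥0∞) • P (S 2 ⁻¹' Abad R) + (3/8 : ℝ≥0∞) • P (S 3 ⁻¹' Abad R)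
      ≤ (1/8 : ℝ≥0∞) • P (Abad (3*R)) + (1/8 : ℝ≥0∞) • P (Abad (3*R))
        + (3/8 : ℝ≥0∞) • P (Abad (3*R)) + (3/8 : ℝ≥0∞) • P (Abad (3*R)) := by
        gcongr ?_ + ?_ + ?_ + ?_ <;> exact smul_le_smul_of_nonneg_left (hle _) zero_le
    _ = ((1/8 : ℝ≥0∞) + 1/8 + 3/8 + 3/8) * P (Abad (3*R)) := by
        simp only [smul_eq_mul]; ring
    _ = P (Abad (3*R)) := by rw [coeff_sum, one_mul]

lemma chain_Abad (hP : carpetEq P) (R : ℝ) (hR : 0 < R) (n : ℕ) :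
    P (Abad R) ≤ P (Abad (3^n * R)) := by
  induction n with
  | zero => simp
  | succ n ih =>
      refine ih.trans ?_
      have h := step_Abad P hP (3^n * R) (by positivity)
      rw [show (3:ℝ) * (3^n * R) = 3^(n+1) * R by ring] at h
      exact h

lemma null_Abad (hP : carpetEq P) (R : ℝ) (hR : 0 < R) : P (Abad R) = 0 := by
  have hanti : Antitone fun n : ℕ => Abad (3^n * R) := by
    intro m n hmn
    exact antitone_Abad (by gcongr <;> norm_num)
  have hint : (⋂ n : ℕ, Abad (3^n * R)) = ∅ := by
    ext x
    simp only [Set.mem_iInter, Set.mem_empty_iff_false, iff_false, not_forall]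
    obtain ⟨n, hn⟩ := pow_unbounded_of_one_lt (max (|x 0|) (|x 1|) / R) (show (1:ℝ) < 3 by norm_num)
    have hM : max (|x 0|) (|x 1|) < 3^n * R := by
      rw [div_lt_iff₀ hR] at hn; linarith
    refine ⟨n, fun hx => ?_⟩
    obtain ⟨j, hj⟩ := hx
    refine hj ?_
    rw [Set.mem_Icc]
    have h0 : |x j| ≤ max (|x 0|) (|x 1|) := by
      fin_cases j
      · exact le_max_left _ _
      · exact le_max_right _ _
    have hab := abs_le.mp (le_of_lt (lt_of_le_of_lt h0 hM))
    exact ⟨by linarith [hab.1], by linarith [hab.2]⟩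
  have htend := tendsto_measure_iInter_atTop
    (μ := P) (fun n => (measurable_Abad (3^n * R)).nullMeasurableSet) hanti
    ⟨0, measure_ne_top P _⟩
  rw [hint] at htend
  simp only [measure_empty] at htend
  have hle : P (Abad R) ≤ 0 :=
    ge_of_tendsto htend (Filter.Eventually.of_forall fun n => chain_Abad P hP R hR n)
  exact le_antisymm hle zero_le

lemma null_compl_unitSq (hP : carpetEq P) : P unitSqᶜ = 0 := by
  have hsub : unitSqᶜ ⊆ ⋃ n : ℕ, Abad (1/(n+1)) := by
    intro x hx
    simp only [unitSq, Set.mem_compl_iff, Set.mem_setOf_eq, not_forall] at hx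
    obtain ⟨i, hi⟩ := hx
    rw [Set.mem_Icc, not_and_or, not_le, not_le] at hi
    rcases hi with h | h
    · obtain ⟨n, hn⟩ := exists_nat_one_div_lt (show (0:ℝ) < -x i by linarith)
      refine Set.mem_iUnion.mpr ⟨n, ⟨i, fun hmem => ?_⟩⟩
      rw [Set.mem_Icc] at hmem
      linarith [hmem.1]
    · obtain ⟨n, hn⟩ := exists_nat_one_div_lt (show (0:ℝ) < x i - 1 by linarith)
      refine Set.mem_iUnion.mpr ⟨n, ⟨i, fun hmem => ?_⟩⟩
      rw [Set.mem_Icc] at hmem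
      linarith [hmem.2]
  exact measure_mono_null hsub (measure_iUnion_null fun n => null_Abad P hP _ (by positivity))

end main

section main2

variable (P : Measure E2) [IsProbabilityMeasure P]

lemma maps_unitSq (i : Fin 4) : ∀ x ∈ unitSq, S i x ∈ unitSq := by
  intro x hx
  simp only [unitSq, Set.mem_setOf_eq] at hx ⊢
  intro j
  have h0 := hx 0
  have h1 := hx 1
  rw [Set.mem_Icc] at h0 h1 ⊢
  fin_cases i <;> fin_cases j <;>
  · simp only [S, pt, Fin.mk_zero, Fin.mk_one, WithLp.equiv_symm_apply, PiLp.toLp_apply,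
      Matrix.cons_val_zero, Matrix.cons_val_one, Matrix.head_cons, Fin.isValue]
    constructor <;> linarith [h0.1, h0.2, h1.1, h1.2]

lemma bound_unitSq : ∀ y ∈ unitSq, ‖y - pt (1/2) (3/4)‖^2 ≤ 9 := by
  intro y hy
  simp only [unitSq, Set.mem_setOf_eq] at hy
  have h0 := hy 0
  have h1 := hy 1
  rw [Set.mem_Icc] at h0 h1
  rw [norm_sq_eq]
  have e0 : (y - pt (1/2) (3/4)) 0 = y 0 - 1/2 := rfl
  have e1 : (y - pt (1/2) (3/4)) 1 = y 1 - 3/4 := rfl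
  rw [e0, e1]
  nlinarith [h0.1, h0.2, h1.1, h1.2]

end main2

theorem total_variance (P : Measure E2) [IsProbabilityMeasure P] (hP : carpetEq P) :
    ∫ x : E2, ‖x - pt (1/2) (3/4)‖^2 ∂P = 7/32 := by
  have hP' := hP
  unfold carpetEq at hP'
  have hae : ∀ᵐ x ∂P, x ∈ unitSq := by
    rw [ae_iff]
    exact null_compl_unitSq P hP
  set f : E2 → ℝ := fun x => ‖x - pt (1/2) (3/4)‖^2 with hf
  have hcont : Continuous f := by
    apply Continuous.pow
    exact (continuous_id.sub continuous_const).norm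
  have hbd : ∀ᵐ x ∂P, ‖f x‖ ≤ 9 := hae.mono fun x hx => by
    rw [Real.norm_eq_abs, abs_of_nonneg (by positivity)]
    exact bound_unitSq x hx
  have hfi : Integrable f P := (integrable_const (9:ℝ)).mono' hcont.aestronglyMeasurable hbd
  have hfiS : ∀ i : Fin 4, Integrable (fun x => f (S i x)) P := by
    intro i
    refine (integrable_const (9:ℝ)).mono' (hcont.comp (continuous_S i)).aestronglyMeasurable ?_
    refine hae.mono fun x hx => ?_
    rw [Real.norm_eq_abs, abs_of_nonneg (by positivity)]
    exact bound_unitSq _ (maps_unitSq i x hx)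
  have hfiM : ∀ i : Fin 4, Integrable f (P.map (S i)) := fun i =>
    (integrable_map_measure hcont.aestronglyMeasurable (measurable_S i).aemeasurable).mpr (hfiS i)
  have hkey : ∀ x : E2, (1/8) * f (S 0 x) + (1/8) * f (S 1 x)
      + (3/8) * f (S 2 x) + (3/8) * f (S 3 x) = (1/9) * f x + 7/36 := by
    intro x
    have e : ∀ (y : E2), f y = (y 0 - 1/2)^2 + (y 1 - 3/4)^2 := by
      intro y
      show ‖y - pt (1/2) (3/4)‖^2 = _
      rw [norm_sq_eq]
      rfl
    rw [e, e, e, e, e]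
    have s00 : S 0 x 0 = x 0 / 3 := rfl
    have s01 : S 0 x 1 = x 1 / 3 := rfl
    have s10 : S 1 x 0 = x 0 / 3 + 2/3 := rfl
    have s11 : S 1 x 1 = x 1 / 3 := rfl
    have s20 : S 2 x 0 = x 0 / 3 := rfl
    have s21 : S 2 x 1 = x 1 / 3 + 2/3 := rfl
    have s30 : S 3 x 0 = x 0 / 3 + 2/3 := rfl
    have s31 : S 3 x 1 = x 1 / 3 + 2/3 := rfl
    rw [s00, s01, s10, s11, s20, s21, s30, s31]
    ring
  have key : ∫ x, f x ∂P = (1/9) * (∫ x, f x ∂P) + 7/36 := by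
    have h0 : Integrable f ((1/8 : ℝ≥0∞) • P.map (S 0)) := (hfiM 0).smul_measure (by norm_num)
    have h1 : Integrable f ((1/8 : ℝ≥0∞) • P.map (S 1)) := (hfiM 1).smul_measure (by norm_num)
    have h2 : Integrable f ((3/8 : ℝ≥0∞) • P.map (S 2)) := (hfiM 2).smul_measure ((ENNReal.div_lt_top (by norm_num) (by norm_num)).ne)
    have h3 : Integrable f ((3/8 : ℝ≥0∞) • P.map (S 3)) := (hfiM 3).smul_measure ((ENNReal.div_lt_top (by norm_num) (by norm_num)).ne)
    conv_lhs => rw [hP']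
    rw [integral_add_measure ((h0.add_measure h1).add_measure h2) h3,
      integral_add_measure (h0.add_measure h1) h2,
      integral_add_measure h0 h1,
      integral_smul_measure, integral_smul_measure, integral_smul_measure, integral_smul_measure,
      integral_map (measurable_S 0).aemeasurable hcont.aestronglyMeasurable,
      integral_map (measurable_S 1).aemeasurable hcont.aestronglyMeasurable,
      integral_map (measurable_S 2).aemeasurable hcont.aestronglyMeasurable,
      integral_map (measurable_S 3).aemeasurable hcont.aestronglyMeasurable]
    have ht1 : ((1/8 : ℝ≥0∞)).toReal = 1/8 := by simp
    have ht3 : ((3/8 : ℝ≥0∞)).toReal = 3/8 := by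
      rw [ENNReal.toReal_div]
      norm_num
    rw [ht1, ht3, smul_eq_mul, smul_eq_mul, smul_eq_mul, smul_eq_mul]
    calc (1/8) * ∫ x, f (S 0 x) ∂P + (1/8) * ∫ x, f (S 1 x) ∂P
          + (3/8) * ∫ x, f (S 2 x) ∂P + (3/8) * ∫ x, f (S 3 x) ∂P
        = ∫ x, ((1/8) * f (S 0 x) + (1/8) * f (S 1 x)
            + (3/8) * f (S 2 x) + (3/8) * f (S 3 x)) ∂P := by
          have i0 : Integrable (fun x => (1/8 : ℝ) * f (S 0 x)) P := (hfiS 0).const_mul _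
          have i1 : Integrable (fun x => (1/8 : ℝ) * f (S 1 x)) P := (hfiS 1).const_mul _
          have i2 : Integrable (fun x => (3/8 : ℝ) * f (S 2 x)) P := (hfiS 2).const_mul _
          have i3 : Integrable (fun x => (3/8 : ℝ) * f (S 3 x)) P := (hfiS 3).const_mul _
          have i01 : Integrable (fun x => (1/8 : ℝ) * f (S 0 x) + (1/8 : ℝ) * f (S 1 x)) P :=
            i0.add i1
          have i012 : Integrable (fun x => (1/8 : ℝ) * f (S 0 x) + (1/8 : ℝ) * f (S 1 x)
              + (3/8 : ℝ) * f (S 2 x)) P := i01.add i2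
          rw [integral_add i012 i3, integral_add i01 i2, integral_add i0 i1,
            integral_const_mul, integral_const_mul, integral_const_mul, integral_const_mul]
      _ = ∫ x, ((1/9) * f x + 7/36) ∂P :=
          integral_congr_ae (Filter.Eventually.of_forall fun x => hkey x)
      _ = (1/9) * (∫ x, f x ∂P) + 7/36 := by
          rw [integral_add (hfi.const_mul _) (integrable_const _), integral_const_mul,
            integral_const]
          simp
  linarith [key]
end
end

section
/- For any (a,b) ∈ ℝ², ∫ ‖x − (a,b)‖² dP(x) = 7/32 + ‖(1/2,3/4) − (a,b)‖². -/
open MeasureTheory ProbabilityTheory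
open scoped ENNReal

noncomputable section

/-! ### Auxiliary lemmas -/

lemma meas_eval (i : Fin 2) : Measurable (fun x : E2 => x i) :=
  (measurable_pi_apply i).comp (WithLp.measurable_ofLp 2 (Fin 2 → ℝ))

lemma meas_pt (f g : E2 → ℝ) (hf : Measurable f) (hg : Measurable g) :
    Measurable (fun x => pt (f x) (g x)) := by
  show Measurable fun x => WithLp.toLp 2 ((![f x, g x]) : Fin 2 → ℝ)
  refine (WithLp.measurable_toLp 2 (Fin 2 → ℝ)).comp (f := fun x => ![f x, g x]) ?_
  apply measurable_pi_lambda
  intro j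
  fin_cases j
  · exact hf
  · exact hg

lemma meas_S : ∀ i : Fin 4, Measurable (S i)
  | 0 => meas_pt _ _ ((meas_eval 0).div_const 3) ((meas_eval 1).div_const 3)
  | 1 => meas_pt _ _ (((meas_eval 0).div_const 3).add_const _) ((meas_eval 1).div_const 3)
  | 2 => meas_pt _ _ ((meas_eval 0).div_const 3) (((meas_eval 1).div_const 3).add_const _)
  | 3 => meas_pt _ _ (((meas_eval 0).div_const 3).add_const _)
      (((meas_eval 1).div_const 3).add_const _)

/-- The square [-r, 1+r]². -/
def Aset (r : ℝ) : Set E2 := {x | ∀ i, x i ∈ Set.Icc (-r) (1+r)}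

lemma meas_Aset (r : ℝ) : MeasurableSet (Aset r) := by
  have h : Aset r = ⋂ i, (fun x : E2 => x i) ⁻¹' Set.Icc (-r) (1+r) := by
    ext x; simp [Aset]
  rw [h]
  exact MeasurableSet.iInter fun i => (meas_eval i) measurableSet_Icc

lemma mem_Aset (x : E2) (r : ℝ) (h0 : -r ≤ x 0) (h0' : x 0 ≤ 1+r)
    (h1 : -r ≤ x 1) (h1' : x 1 ≤ 1+r) : x ∈ Aset r := by
  intro j
  fin_cases j
  · exact ⟨h0, h0'⟩
  · exact ⟨h1, h1'⟩

lemma S_maps_Aset (r : ℝ) (i : Fin 4) (x : E2) (hx : x ∈ Aset (3*r)) :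
    S i x ∈ Aset r := by
  have h0 := (hx 0).1; have h0' := (hx 0).2
  have h1 := (hx 1).1; have h1' := (hx 1).2
  fin_cases i
  · exact mem_Aset _ r (show -r ≤ x 0 / 3 by linarith) (show x 0 / 3 ≤ 1 + r by linarith)
      (show -r ≤ x 1 / 3 by linarith) (show x 1 / 3 ≤ 1 + r by linarith)
  · exact mem_Aset _ r (show -r ≤ x 0 / 3 + 2/3 by linarith)
      (show x 0 / 3 + 2/3 ≤ 1 + r by linarith)
      (show -r ≤ x 1 / 3 by linarith) (show x 1 / 3 ≤ 1 + r by linarith)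
  · exact mem_Aset _ r (show -r ≤ x 0 / 3 by linarith) (show x 0 / 3 ≤ 1 + r by linarith)
      (show -r ≤ x 1 / 3 + 2/3 by linarith) (show x 1 / 3 + 2/3 ≤ 1 + r by linarith)
  · exact mem_Aset _ r (show -r ≤ x 0 / 3 + 2/3 by linarith)
      (show x 0 / 3 + 2/3 ≤ 1 + r by linarith)
      (show -r ≤ x 1 / 3 + 2/3 by linarith) (show x 1 / 3 + 2/3 ≤ 1 + r by linarith)

lemma Aset_step (P : Measure E2) [IsProbabilityMeasure P] (hP : carpetEq P) (r : ℝ) :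
    P (Aset (3*r)) ≤ P (Aset r) := by
  have hsub : ∀ i : Fin 4, Aset (3*r) ⊆ S i ⁻¹' (Aset r) := by
    intro i x hx
    exact S_maps_Aset r i x hx
  have hmap : ∀ i : Fin 4, P (Aset (3*r)) ≤ (P.map (S i)) (Aset r) := by
    intro i
    rw [Measure.map_apply (meas_S i) (meas_Aset r)]
    exact measure_mono (hsub i)
  calc P (Aset (3*r))
      = (1/8 : ℝ≥0∞) * P (Aset (3*r)) + (1/8 : ℝ≥0∞) * P (Aset (3*r))
        + (3/8 : ℝ≥0∞) * P (Aset (3*r)) + (3/8 : ℝ≥0∞) * P (Aset (3*r)) := by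
        rw [← add_mul, ← add_mul, ← add_mul, show (1/8 : ℝ≥0∞) + 1/8 + 3/8 + 3/8 = 1 by
          rw [ENNReal.div_add_div_same, ENNReal.div_add_div_same, ENNReal.div_add_div_same]
          norm_num
          exact ENNReal.div_self (by norm_num) (by norm_num), one_mul]
    _ ≤ (1/8 : ℝ≥0∞) * (P.map (S 0)) (Aset r) + (1/8 : ℝ≥0∞) * (P.map (S 1)) (Aset r)
        + (3/8 : ℝ≥0∞) * (P.map (S 2)) (Aset r) + (3/8 : ℝ≥0∞) * (P.map (S 3)) (Aset r) := by
        exact add_le_add (add_le_add (add_le_add (mul_le_mul_right (hmap 0) _)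
          (mul_le_mul_right (hmap 1) _)) (mul_le_mul_right (hmap 2) _))
          (mul_le_mul_right (hmap 3) _)
    _ = P (Aset r) := by
        conv_rhs => rw [hP]
        simp [Measure.add_apply, Measure.smul_apply, smul_eq_mul]

lemma Aset_one (P : Measure E2) [IsProbabilityMeasure P] (hP : carpetEq P) :
    P (Aset 1) = 1 := by
  have hchain : ∀ k : ℕ, P (Aset ((3:ℝ)^k)) ≤ P (Aset 1) := by
    intro k
    induction k with
    | zero => simp
    | succ n ih =>
      have : P (Aset ((3:ℝ)^(n+1))) ≤ P (Aset ((3:ℝ)^n)) := by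
        have := Aset_step P hP ((3:ℝ)^n)
        rwa [show (3:ℝ) * 3^n = 3^(n+1) by ring] at this
      exact le_trans this ih
  have hmono : Monotone (fun k : ℕ => Aset ((3:ℝ)^k)) := by
    intro m n hmn x hx j
    have h3 : (3:ℝ)^m ≤ (3:ℝ)^n := pow_le_pow_right₀ (by norm_num) hmn
    have := hx j
    constructor <;> [linarith [this.1]; linarith [this.2]]
  have hunion : (⋃ k : ℕ, Aset ((3:ℝ)^k)) = Set.univ := by
    ext x
    simp only [Set.mem_iUnion, Set.mem_univ, iff_true]
    obtain ⟨k, hk⟩ := pow_unbounded_of_one_lt (|x 0| + |x 1|) (by norm_num : (1:ℝ) < 3)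
    have ha0 : |x 0| ≤ (3:ℝ)^k :=
      le_of_lt (lt_of_le_of_lt (le_add_of_nonneg_right (abs_nonneg _)) hk)
    have ha1 : |x 1| ≤ (3:ℝ)^k :=
      le_of_lt (lt_of_le_of_lt (le_add_of_nonneg_left (abs_nonneg _)) hk)
    exact ⟨k, mem_Aset x _ (by linarith [neg_abs_le (x 0)]) (by linarith [le_abs_self (x 0)])
      (by linarith [neg_abs_le (x 1)]) (by linarith [le_abs_self (x 1)])⟩
  have htend : Filter.Tendsto (fun k : ℕ => P (Aset ((3:ℝ)^k))) Filter.atTop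
      (nhds (P (⋃ k : ℕ, Aset ((3:ℝ)^k)))) :=
    tendsto_measure_iUnion_atTop hmono
  rw [hunion, measure_univ] at htend
  have hle : (1:ℝ≥0∞) ≤ P (Aset 1) := le_of_tendsto' htend hchain
  exact le_antisymm prob_le_one hle

lemma ae_bound (P : Measure E2) [IsProbabilityMeasure P] (hP : carpetEq P) :
    ∀ᵐ x ∂P, ∀ i : Fin 2, x i ∈ Set.Icc (-1:ℝ) 2 := by
  have h1 : P (Aset 1)ᶜ = 0 := by
    rw [measure_compl (meas_Aset 1) (measure_ne_top P _), Aset_one P hP, measure_univ,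
      tsub_self]
  refine measure_mono_null ?_ h1
  intro x hx
  simp only [Set.mem_compl_iff]
  intro hmem
  apply hx
  intro i
  have := hmem i
  constructor <;> [linarith [this.1]; linarith [this.2, show (1:ℝ)+1 = 2 by norm_num]]

lemma integrable_of_bound (P : Measure E2) [IsProbabilityMeasure P] (hP : carpetEq P)
    (f : E2 → ℝ) (hm : Measurable f) (C : ℝ)
    (hb : ∀ x : E2, (∀ i : Fin 2, x i ∈ Set.Icc (-1:ℝ) 2) → |f x| ≤ C) :
    Integrable f P := by
  apply Integrable.mono' (integrable_const C) hm.aestronglyMeasurable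
  filter_upwards [ae_bound P hP] with x hx
  simpa using hb x hx

lemma int_eval (P : Measure E2) [IsProbabilityMeasure P] (hP : carpetEq P) (i : Fin 2) :
    Integrable (fun x : E2 => x i) P := by
  apply integrable_of_bound P hP _ (meas_eval i) 2
  intro x hx
  have := hx i
  rw [abs_le]
  exact ⟨by linarith [this.1], this.2⟩

lemma int_evalsq (P : Measure E2) [IsProbabilityMeasure P] (hP : carpetEq P) (i : Fin 2) :
    Integrable (fun x : E2 => (x i)^2) P := by
  apply integrable_of_bound P hP _ ((meas_eval i).pow_const 2) 4
  intro x hx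
  have h := hx i
  rw [abs_le]
  constructor
  · nlinarith [sq_nonneg (x i)]
  · nlinarith [h.1, h.2]

/-- The fundamental integral identity coming from self-affinity. -/
lemma integral_self_affine (P : Measure E2) [IsProbabilityMeasure P] (hP : carpetEq P)
    (f : E2 → ℝ) (hm : Measurable f) (hf : Integrable f P) :
    ∫ x, f x ∂P = (1/8) * ∫ x, f (S 0 x) ∂P + (1/8) * ∫ x, f (S 1 x) ∂P
      + (3/8) * ∫ x, f (S 2 x) ∂P + (3/8) * ∫ x, f (S 3 x) ∂P := by
  set μ0 := (1/8 : ℝ≥0∞) • P.map (S 0) with hμ0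
  set μ1 := (1/8 : ℝ≥0∞) • P.map (S 1) with hμ1
  set μ2 := (3/8 : ℝ≥0∞) • P.map (S 2) with hμ2
  set μ3 := (3/8 : ℝ≥0∞) • P.map (S 3) with hμ3
  have hf' : Integrable f (μ0 + μ1 + μ2 + μ3) := by rw [← hP]; exact hf
  rw [integrable_add_measure] at hf'
  obtain ⟨hf012, hf3⟩ := hf'
  rw [integrable_add_measure] at hf012
  obtain ⟨hf01, hf2⟩ := hf012
  rw [integrable_add_measure] at hf01
  obtain ⟨hf0, hf1⟩ := hf01
  have step : ∀ (c : ℝ≥0∞) (i : Fin 4),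
      ∫ x, f x ∂(c • P.map (S i)) = c.toReal * ∫ x, f (S i x) ∂P := by
    intro c i
    rw [integral_smul_measure, integral_map (meas_S i).aemeasurable hm.aestronglyMeasurable]
    simp [smul_eq_mul]
  have ht8 : ((1:ℝ≥0∞)/8).toReal = (1:ℝ)/8 := by
    rw [ENNReal.toReal_div]; norm_num
  have ht38 : ((3:ℝ≥0∞)/8).toReal = (3:ℝ)/8 := by
    rw [ENNReal.toReal_div]; norm_num
  calc ∫ x, f x ∂P = ∫ x, f x ∂(μ0 + μ1 + μ2 + μ3) := by rw [← hP]
    _ = ∫ x, f x ∂μ0 + ∫ x, f x ∂μ1 + ∫ x, f x ∂μ2 + ∫ x, f x ∂μ3 := by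
        rw [integral_add_measure (hf0.add_measure hf1 |>.add_measure hf2) hf3,
          integral_add_measure (hf0.add_measure hf1) hf2,
          integral_add_measure hf0 hf1]
    _ = (1/8) * ∫ x, f (S 0 x) ∂P + (1/8) * ∫ x, f (S 1 x) ∂P
        + (3/8) * ∫ x, f (S 2 x) ∂P + (3/8) * ∫ x, f (S 3 x) ∂P := by
        rw [hμ0, hμ1, hμ2, hμ3, step _ 0, step _ 1, step _ 2, step _ 3, ht8, ht38]

lemma integral_affine (P : Measure E2) [IsProbabilityMeasure P] (hP : carpetEq P)
    (i : Fin 2) (c : ℝ) :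
    ∫ x : E2, (x i / 3 + c) ∂P = (∫ x : E2, x i ∂P) / 3 + c := by
  rw [integral_add ((int_eval P hP i).div_const 3) (integrable_const c), integral_div,
    integral_const]
  simp

lemma integral_affine_sq (P : Measure E2) [IsProbabilityMeasure P] (hP : carpetEq P)
    (i : Fin 2) (c : ℝ) :
    ∫ x : E2, (x i / 3 + c)^2 ∂P
      = (∫ x : E2, (x i)^2 ∂P) / 9 + (2*c/3) * (∫ x : E2, x i ∂P) + c^2 := by
  have hr : ∀ x : E2, (x i / 3 + c)^2 = (x i)^2 / 9 + (2*c/3) * (x i) + c^2 := by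
    intro x; ring
  simp_rw [hr]
  have h1 : Integrable (fun x : E2 => (x i)^2 / 9) P := (int_evalsq P hP i).div_const 9
  have h2 : Integrable (fun x : E2 => 2*c/3 * (x i)) P := (int_eval P hP i).const_mul (2*c/3)
  have h12 : Integrable (fun x : E2 => (x i)^2 / 9 + 2*c/3 * (x i)) P := h1.add h2
  rw [integral_add h12 (integrable_const _), integral_add h1 h2,
    integral_div, integral_const_mul, integral_const]
  simp

lemma moment_x (P : Measure E2) [IsProbabilityMeasure P] (hP : carpetEq P) :
    ∫ x : E2, x 0 ∂P = 1/2 := by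
  have key := integral_self_affine P hP (fun x => x 0) (meas_eval 0) (int_eval P hP 0)
  have e0 : (fun x : E2 => (fun x : E2 => x 0) (S 0 x)) = fun x : E2 => x 0 / 3 + 0 := by
    funext x; show x 0 / 3 = x 0 / 3 + 0; ring
  have e1 : (fun x : E2 => (fun x : E2 => x 0) (S 1 x)) = fun x : E2 => x 0 / 3 + 2/3 := rfl
  have e2 : (fun x : E2 => (fun x : E2 => x 0) (S 2 x)) = fun x : E2 => x 0 / 3 + 0 := by
    funext x; show x 0 / 3 = x 0 / 3 + 0; ring
  have e3 : (fun x : E2 => (fun x : E2 => x 0) (S 3 x)) = fun x : E2 => x 0 / 3 + 2/3 := rfl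
  simp only [e0, e1, e2, e3] at key
  rw [integral_affine P hP 0 0, integral_affine P hP 0 (2/3)] at key
  linarith

lemma moment_y (P : Measure E2) [IsProbabilityMeasure P] (hP : carpetEq P) :
    ∫ x : E2, x 1 ∂P = 3/4 := by
  have key := integral_self_affine P hP (fun x => x 1) (meas_eval 1) (int_eval P hP 1)
  have e0 : (fun x : E2 => (fun x : E2 => x 1) (S 0 x)) = fun x : E2 => x 1 / 3 + 0 := by
    funext x; show x 1 / 3 = x 1 / 3 + 0; ring
  have e1 : (fun x : E2 => (fun x : E2 => x 1) (S 1 x)) = fun x : E2 => x 1 / 3 + 0 := by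
    funext x; show x 1 / 3 = x 1 / 3 + 0; ring
  have e2 : (fun x : E2 => (fun x : E2 => x 1) (S 2 x)) = fun x : E2 => x 1 / 3 + 2/3 := rfl
  have e3 : (fun x : E2 => (fun x : E2 => x 1) (S 3 x)) = fun x : E2 => x 1 / 3 + 2/3 := rfl
  simp only [e0, e1, e2, e3] at key
  rw [integral_affine P hP 1 0, integral_affine P hP 1 (2/3)] at key
  linarith

lemma moment_xsq (P : Measure E2) [IsProbabilityMeasure P] (hP : carpetEq P) :
    ∫ x : E2, (x 0)^2 ∂P = 3/8 := by
  have key := integral_self_affine P hP (fun x => (x 0)^2)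
    ((meas_eval 0).pow_const 2) (int_evalsq P hP 0)
  have e0 : (fun x : E2 => (fun x : E2 => (x 0)^2) (S 0 x)) = fun x : E2 => (x 0 / 3 + 0)^2 := by
    funext x; show (x 0 / 3)^2 = (x 0 / 3 + 0)^2; ring
  have e1 : (fun x : E2 => (fun x : E2 => (x 0)^2) (S 1 x)) = fun x : E2 => (x 0 / 3 + 2/3)^2 := rfl
  have e2 : (fun x : E2 => (fun x : E2 => (x 0)^2) (S 2 x)) = fun x : E2 => (x 0 / 3 + 0)^2 := by
    funext x; show (x 0 / 3)^2 = (x 0 / 3 + 0)^2; ring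
  have e3 : (fun x : E2 => (fun x : E2 => (x 0)^2) (S 3 x)) = fun x : E2 => (x 0 / 3 + 2/3)^2 := rfl
  simp only [e0, e1, e2, e3] at key
  rw [integral_affine_sq P hP 0 0, integral_affine_sq P hP 0 (2/3), moment_x P hP] at key
  linarith

lemma moment_ysq (P : Measure E2) [IsProbabilityMeasure P] (hP : carpetEq P) :
    ∫ x : E2, (x 1)^2 ∂P = 21/32 := by
  have key := integral_self_affine P hP (fun x => (x 1)^2)
    ((meas_eval 1).pow_const 2) (int_evalsq P hP 1)
  have e0 : (fun x : E2 => (fun x : E2 => (x 1)^2) (S 0 x)) = fun x : E2 => (x 1 / 3 + 0)^2 := by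
    funext x; show (x 1 / 3)^2 = (x 1 / 3 + 0)^2; ring
  have e1 : (fun x : E2 => (fun x : E2 => (x 1)^2) (S 1 x)) = fun x : E2 => (x 1 / 3 + 0)^2 := by
    funext x; show (x 1 / 3)^2 = (x 1 / 3 + 0)^2; ring
  have e2 : (fun x : E2 => (fun x : E2 => (x 1)^2) (S 2 x)) = fun x : E2 => (x 1 / 3 + 2/3)^2 := rfl
  have e3 : (fun x : E2 => (fun x : E2 => (x 1)^2) (S 3 x)) = fun x : E2 => (x 1 / 3 + 2/3)^2 := rfl
  simp only [e0, e1, e2, e3] at key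
  rw [integral_affine_sq P hP 1 0, integral_affine_sq P hP 1 (2/3), moment_y P hP] at key
  linarith

lemma norm_sq_E2 (y : E2) : ‖y‖^2 = (y 0)^2 + (y 1)^2 := by
  rw [EuclideanSpace.norm_eq, Real.sq_sqrt (by positivity)]
  simp [Fin.sum_univ_two, sq_abs]

theorem distortion_about_point (P : Measure E2) [IsProbabilityMeasure P] (hP : carpetEq P) :
    ∀ a b : ℝ, ∫ x : E2, ‖x - pt a b‖^2 ∂P = 7/32 + ‖pt (1/2) (3/4) - pt a b‖^2 := by
  intro a b
  have hrw : ∀ x : E2, ‖x - pt a b‖^2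
      = (x 0)^2 + (x 1)^2 - (2*a) * (x 0) - (2*b) * (x 1) + (a^2 + b^2) := by
    intro x
    rw [norm_sq_E2]
    show (x 0 - a)^2 + (x 1 - b)^2 = _
    ring
  simp_rw [hrw]
  have i0 := int_eval P hP 0
  have i1 := int_eval P hP 1
  have i0s := int_evalsq P hP 0
  have i1s := int_evalsq P hP 1
  have j1 : Integrable (fun x : E2 => (x 0)^2 + (x 1)^2) P := i0s.add i1s
  have j2 : Integrable (fun x : E2 => (x 0)^2 + (x 1)^2 - (2*a) * (x 0)) P :=
    j1.sub (i0.const_mul (2*a))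
  have j3 : Integrable (fun x : E2 => (x 0)^2 + (x 1)^2 - (2*a) * (x 0) - (2*b) * (x 1)) P :=
    j2.sub (i1.const_mul (2*b))
  rw [integral_add j3 (integrable_const _),
    integral_sub j2 (i1.const_mul (2*b)),
    integral_sub j1 (i0.const_mul (2*a)),
    integral_add i0s i1s, integral_const_mul, integral_const_mul, integral_const,
    moment_x P hP, moment_y P hP, moment_xsq P hP, moment_ysq P hP]
  simp only [show pt (1/2) (3/4) 0 = 1/2 from rfl, show pt (1/2) (3/4) 1 = 3/4 from rfl,
    measure_univ, probReal_univ, ENNReal.toReal_one, smul_eq_mul, one_mul, one_smul]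
  ring
end
end

section
/- For any word ω ∈ {1,2,3,4}*, E(ω1, ω3) = E(ω2, ω4) = (31/126) E(ω), where E(ω) = ∫_{J_ω} ‖x − a(ω)‖² dP and E(ωi, ωj) = ∫_{J_{ωi}∪J_{ωj}} ‖x − a(ωi,ωj)‖² dP with a(ωi,ωj) the conditional expectation of X on J_{ωi}∪J_{ωj}. -/
open MeasureTheory ProbabilityTheory
open scoped ENNReal

noncomputable section

-- auxiliary
@[simp] lemma pt_apply_0 (a b : ℝ) : pt a b 0 = a := rfl
@[simp] lemma pt_apply_1 (a b : ℝ) : pt a b 1 = b := rfl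

lemma E2_ext {x y : E2} (h0 : x 0 = y 0) (h1 : x 1 = y 1) : x = y := by
  ext i; fin_cases i <;> assumption

def vS : Fin 4 → E2 := ![pt 0 0, pt (2/3) 0, pt 0 (2/3), pt (2/3) (2/3)]

lemma S_apply (i : Fin 4) (x : E2) : S i x = (3:ℝ)⁻¹ • x + vS i := by
  fin_cases i <;>
    refine E2_ext ?_ ?_ <;>
    simp [S, vS, PiLp.add_apply, PiLp.smul_apply, smul_eq_mul] <;> ring

lemma S_apply_coord (i : Fin 4) (x : E2) (j : Fin 2) :
    S i x j = x j / 3 + vS i j := by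
  rw [S_apply]; simp [PiLp.add_apply, PiLp.smul_apply, smul_eq_mul]; ring

def Sinv (i : Fin 4) : E2 → E2 := fun x => (3:ℝ) • (x - vS i)

lemma Sinv_left (i : Fin 4) : Function.LeftInverse (Sinv i) (S i) := by
  intro x
  rw [S_apply]; unfold Sinv
  refine E2_ext ?_ ?_ <;>
    simp [PiLp.add_apply, PiLp.smul_apply, PiLp.sub_apply, smul_eq_mul] <;> ring

lemma Sinv_right (i : Fin 4) : Function.RightInverse (Sinv i) (S i) := by
  intro x
  rw [S_apply]; unfold Sinv
  refine E2_ext ?_ ?_ <;>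
    simp [PiLp.add_apply, PiLp.smul_apply, PiLp.sub_apply, smul_eq_mul] <;> ring

lemma S_image_eq_preimage (i : Fin 4) : Set.image (S i) = Set.preimage (Sinv i) :=
  Set.image_eq_preimage_of_inverse (Sinv_left i) (Sinv_right i)

lemma continuous_Sinv (i : Fin 4) : Continuous (Sinv i) := by unfold Sinv; fun_prop

lemma S_injective (i : Fin 4) : Function.Injective (S i) := (Sinv_left i).injective

lemma measurableSet_unitSq : MeasurableSet unitSq := by
  have : unitSq = ⋂ i : Fin 2, {x : E2 | x i ∈ Set.Icc (0:ℝ) 1} := by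
    ext x; simp [unitSq, Set.mem_iInter]
  rw [this]
  refine MeasurableSet.iInter fun i => ?_
  exact measurableSet_Icc.preimage (by fun_prop : Measurable fun x : E2 => x i)

lemma S_maps_unitSq (i : Fin 4) {x : E2} (hx : x ∈ unitSq) : S i x ∈ unitSq := by
  intro j
  have h0 := hx 0
  have h1 := hx 1
  simp only [Set.mem_Icc] at h0 h1 ⊢
  rw [S_apply_coord]
  fin_cases i <;> fin_cases j <;> simp [vS] <;> constructor <;> linarith

lemma vS_mem (i : Fin 4) (j : Fin 2) : vS i j = 0 ∨ vS i j = 2/3 := by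
  fin_cases i <;> fin_cases j <;> simp [vS]

lemma S_disjoint {i j : Fin 4} (hij : i ≠ j) {x y : E2} (hx : x ∈ unitSq)
    (hy : y ∈ unitSq) : S i x ≠ S j y := by
  intro h
  have h0 : S i x 0 = S j y 0 := by rw [h]
  have h1 : S i x 1 = S j y 1 := by rw [h]
  rw [S_apply_coord, S_apply_coord] at h0 h1
  have hx0 := hx 0; have hx1 := hx 1; have hy0 := hy 0; have hy1 := hy 1
  simp only [Set.mem_Icc] at hx0 hx1 hy0 hy1
  fin_cases i <;> fin_cases j <;> simp_all [vS] <;> linarith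
@[simp] lemma Sw_nil (x : E2) : Sw [] x = x := rfl
lemma Sw_cons (a : Fin 4) (w : List (Fin 4)) (x : E2) : Sw (a :: w) x = S a (Sw w x) := rfl

lemma Sw_append_singleton (w : List (Fin 4)) (i : Fin 4) (x : E2) :
    Sw (w ++ [i]) x = Sw w (S i x) := by
  unfold Sw; rw [List.foldr_append]; rfl

/-- scaling ratio of Sw w -/
def rwS (w : List (Fin 4)) : ℝ := (3:ℝ)⁻¹ ^ w.length

lemma rwS_pos (w : List (Fin 4)) : 0 < rwS w := by unfold rwS; positivity

lemma Sw_affine (w : List (Fin 4)) (x : E2) : Sw w x = rwS w • x + Sw w 0 := by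
  induction w generalizing x with
  | nil => simp [rwS]
  | cons a w ih =>
    rw [Sw_cons, Sw_cons, ih x, ih 0, S_apply, S_apply]
    show _ = ((3:ℝ)⁻¹ ^ (w.length+1)) • x + _
    rw [pow_succ]
    unfold rwS
    module

lemma Sw_sub (w : List (Fin 4)) (x y : E2) : Sw w x - Sw w y = rwS w • (x - y) := by
  rw [Sw_affine w x, Sw_affine w y]; module

lemma Sw_normsq_sub (w : List (Fin 4)) (x y : E2) :
    ‖Sw w x - Sw w y‖ ^ 2 = rwS w ^ 2 * ‖x - y‖ ^ 2 := by
  rw [Sw_sub, norm_smul, Real.norm_eq_abs, abs_of_pos (rwS_pos w), mul_pow]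

lemma continuous_Sw (w : List (Fin 4)) : Continuous (Sw w) := by
  induction w with
  | nil => exact continuous_id
  | cons a w ih =>
    have : Sw (a :: w) = S a ∘ Sw w := rfl
    rw [this]; exact (continuous_S a).comp ih

lemma measurable_Sw (w : List (Fin 4)) : Measurable (Sw w) := (continuous_Sw w).measurable

lemma Sw_maps_unitSq (w : List (Fin 4)) {x : E2} (hx : x ∈ unitSq) : Sw w x ∈ unitSq := by
  induction w with
  | nil => exact hx
  | cons a w ih => exact S_maps_unitSq a ih

lemma Sw_image_subset (w : List (Fin 4)) {B : Set E2} (hB : B ⊆ unitSq) :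
    Sw w '' B ⊆ unitSq := by
  rintro y ⟨x, hx, rfl⟩; exact Sw_maps_unitSq w (hB hx)

lemma measurableSet_S_image (i : Fin 4) {B : Set E2} (hB : MeasurableSet B) :
    MeasurableSet (S i '' B) := by
  rw [show S i '' B = Sinv i ⁻¹' B from congrFun (S_image_eq_preimage i) B]
  exact hB.preimage (continuous_Sinv i).measurable

lemma measurableSet_Sw_image (w : List (Fin 4)) {B : Set E2} (hB : MeasurableSet B) :
    MeasurableSet (Sw w '' B) := by
  induction w with
  | nil => rw [show Sw [] '' B = B by ext y; simp]; exact hB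
  | cons a w ih =>
    have : Sw (a :: w) '' B = S a '' (Sw w '' B) := by
      rw [← Set.image_comp]; rfl
    rw [this]; exact measurableSet_S_image a ih

lemma measurableSet_Jset (i : Fin 4) : MeasurableSet (Jset i) :=
  measurableSet_S_image i measurableSet_unitSq

lemma Jw_append (w : List (Fin 4)) (i : Fin 4) : Jw (w ++ [i]) = Sw w '' Jset i := by
  unfold Jw Jset
  rw [show Sw (w ++ [i]) = Sw w ∘ S i from funext (Sw_append_singleton w i),
    Set.image_comp]
/-- weights -/
def pr : Fin 4 → ℝ≥0∞ := ![1/8, 1/8, 3/8, 3/8]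

lemma pr_sum : pr 0 + pr 1 + pr 2 + pr 3 = 1 := by
  show (1:ℝ≥0∞)/8 + 1/8 + 3/8 + 3/8 = 1
  rw [ENNReal.div_add_div_same, ENNReal.div_add_div_same, ENNReal.div_add_div_same]
  norm_num
  exact ENNReal.div_self (by norm_num) (by norm_num)

section Meas

variable {P : Measure E2} [IsProbabilityMeasure P] (hP : carpetEq P)
include hP

lemma measEq {A : Set E2} (hA : MeasurableSet A) :
    P A = pr 0 * P (S 0 ⁻¹' A) + pr 1 * P (S 1 ⁻¹' A)
      + pr 2 * P (S 2 ⁻¹' A) + pr 3 * P (S 3 ⁻¹' A) := by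
  conv_lhs => rw [hP]
  simp [Measure.add_apply, Measure.smul_apply, smul_eq_mul,
    Measure.map_apply (measurable_S _) hA, pr]

/-- tail bound: if f(S_j x) ≤ f(x)/3 + 2c/3 for all j, x, then P{f > c} = 0 -/
lemma tail_null (f : E2 → ℝ) (hf : Measurable f) (c : ℝ)
    (h : ∀ j x, f (S j x) ≤ f x / 3 + 2 * c / 3) :
    P {x | c < f x} = 0 := by
  have step : ∀ ε : ℝ, 0 < ε → P {x | c + ε < f x} ≤ P {x | c + 3 * ε < f x} := by
    intro ε hε
    have hA : MeasurableSet {x : E2 | c + ε < f x} := measurableSet_lt measurable_const hf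
    rw [measEq hP hA]
    have hsub : ∀ j : Fin 4, S j ⁻¹' {x | c + ε < f x} ⊆ {x | c + 3 * ε < f x} := by
      intro j x hx
      simp only [Set.mem_preimage, Set.mem_setOf_eq] at hx ⊢
      have := h j x
      linarith
    have hb : ∀ j : Fin 4, P (S j ⁻¹' {x | c + ε < f x}) ≤ P {x | c + 3 * ε < f x} :=
      fun j => measure_mono (hsub j)
    calc pr 0 * P (S 0 ⁻¹' _) + pr 1 * P (S 1 ⁻¹' _) + pr 2 * P (S 2 ⁻¹' _)
          + pr 3 * P (S 3 ⁻¹' _)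
        ≤ pr 0 * P {x | c + 3 * ε < f x} + pr 1 * P {x | c + 3 * ε < f x}
          + pr 2 * P {x | c + 3 * ε < f x} + pr 3 * P {x | c + 3 * ε < f x} := by
          gcongr <;> exact hsub _
      _ = (pr 0 + pr 1 + pr 2 + pr 3) * P {x | c + 3 * ε < f x} := by ring
      _ = P {x | c + 3 * ε < f x} := by rw [pr_sum, one_mul]
  have iter : ∀ (ε : ℝ), 0 < ε → ∀ n : ℕ,
      P {x | c + ε < f x} ≤ P {x | c + 3 ^ n * ε < f x} := by
    intro ε hε n
    induction n with
    | zero => simp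
    | succ n ih =>
      refine ih.trans ?_
      have h3 : (0:ℝ) < 3 ^ n * ε := by positivity
      have := step _ h3
      rw [show c + 3 * (3 ^ n * ε) = c + 3 ^ (n+1) * ε by ring] at this
      exact this
  have hlim : ∀ ε : ℝ, 0 < ε →
      Filter.Tendsto (fun n : ℕ => P {x | c + 3 ^ n * ε < f x}) Filter.atTop
        (nhds (P (⋂ n : ℕ, {x | c + 3 ^ n * ε < f x}))) := by
    intro ε hε
    refine tendsto_measure_iInter_atTop (fun n =>
      (measurableSet_lt measurable_const hf).nullMeasurableSet) ?_ ⟨0, measure_ne_top _ _⟩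
    intro m n hmn x hx
    simp only [Set.mem_setOf_eq] at hx ⊢
    have : (3:ℝ) ^ m * ε ≤ 3 ^ n * ε := by
      apply mul_le_mul_of_nonneg_right _ hε.le
      exact pow_le_pow_right₀ (by norm_num) hmn
    linarith
  have hempty : ∀ ε : ℝ, 0 < ε → (⋂ n : ℕ, {x : E2 | c + 3 ^ n * ε < f x}) = ∅ := by
    intro ε hε
    ext x
    simp only [Set.mem_iInter, Set.mem_setOf_eq, Set.mem_empty_iff_false, iff_false,
      not_forall, not_lt]
    obtain ⟨n, hn⟩ := pow_unbounded_of_one_lt ((f x - c) / ε) (by norm_num : (1:ℝ) < 3)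
    exact ⟨n, by nlinarith [(div_lt_iff₀ hε).mp hn]⟩
  have hε0 : ∀ ε : ℝ, 0 < ε → P {x | c + ε < f x} = 0 := by
    intro ε hε
    have := hlim ε hε
    rw [hempty ε hε] at this
    simp only [measure_empty] at this
    exact le_antisymm (ge_of_tendsto' this fun n => iter ε hε n) zero_le
  have : {x : E2 | c < f x} ⊆ ⋃ n : ℕ, {x | c + (1:ℝ)/(n+1) < f x} := by
    intro x hx
    simp only [Set.mem_setOf_eq] at hx
    obtain ⟨n, hn⟩ := exists_nat_one_div_lt (sub_pos.mpr hx)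
    exact Set.mem_iUnion.mpr ⟨n, by simp only [Set.mem_setOf_eq]; linarith⟩
  refine measure_mono_null this (measure_iUnion_null fun n => hε0 _ (by positivity))

lemma unitSq_compl_null : P unitSqᶜ = 0 := by
  have h1 : P {x : E2 | 1 < x 0} = 0 := by
    refine tail_null hP (fun x => x 0) (by fun_prop : Measurable fun x : E2 => x 0) 1
      fun j x => ?_
    show S j x 0 ≤ x 0 / 3 + 2 * 1 / 3
    rw [S_apply_coord]
    rcases vS_mem j 0 with h | h <;> rw [h] <;> linarith
  have h2 : P {x : E2 | 1 < x 1} = 0 := by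
    refine tail_null hP (fun x => x 1) (by fun_prop : Measurable fun x : E2 => x 1) 1
      fun j x => ?_
    show S j x 1 ≤ x 1 / 3 + 2 * 1 / 3
    rw [S_apply_coord]
    rcases vS_mem j 1 with h | h <;> rw [h] <;> linarith
  have h3 : P {x : E2 | 0 < -(x 0)} = 0 := by
    refine tail_null hP (fun x => -(x 0)) (by fun_prop : Measurable fun x : E2 => -(x 0)) 0
      fun j x => ?_
    show -(S j x 0) ≤ -(x 0) / 3 + 2 * 0 / 3
    rw [S_apply_coord]
    rcases vS_mem j 0 with h | h <;> rw [h] <;> linarith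
  have h4 : P {x : E2 | 0 < -(x 1)} = 0 := by
    refine tail_null hP (fun x => -(x 1)) (by fun_prop : Measurable fun x : E2 => -(x 1)) 0
      fun j x => ?_
    show -(S j x 1) ≤ -(x 1) / 3 + 2 * 0 / 3
    rw [S_apply_coord]
    rcases vS_mem j 1 with h | h <;> rw [h] <;> linarith
  have hsub : unitSqᶜ ⊆ {x : E2 | 1 < x 0} ∪ {x : E2 | 1 < x 1}
      ∪ {x : E2 | 0 < -(x 0)} ∪ {x : E2 | 0 < -(x 1)} := by
    intro x hx
    simp only [unitSq, Set.mem_compl_iff, Set.mem_setOf_eq, not_forall] at hx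
    obtain ⟨i, hi⟩ := hx
    have hi' : x i < 0 ∨ 1 < x i := by
      by_contra hcon
      push_neg at hcon
      exact hi (Set.mem_Icc.mpr ⟨hcon.1, hcon.2⟩)
    simp only [Set.mem_union, Set.mem_setOf_eq]
    fin_cases i
    · have h' : x 0 < 0 ∨ 1 < x 0 := hi'
      rcases h' with h | h
      · exact Or.inl (Or.inr (by linarith))
      · exact Or.inl (Or.inl (Or.inl h))
    · have h' : x 1 < 0 ∨ 1 < x 1 := hi'
      rcases h' with h | h
      · exact Or.inr (by linarith)
      · exact Or.inl (Or.inl (Or.inr h))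
  refine measure_mono_null hsub ?_
  refine measure_union_null (measure_union_null (measure_union_null h1 h2) h3) h4

lemma ae_unitSq : ∀ᵐ x ∂P, x ∈ unitSq := by
  rw [Filter.eventually_iff, mem_ae_iff]
  exact unitSq_compl_null hP

lemma restrict_unitSq : P.restrict unitSq = P :=
  Measure.restrict_eq_self_of_ae_mem (ae_unitSq hP)

end Meas
section Moments

variable {P : Measure E2} [IsProbabilityMeasure P] (hP : carpetEq P)
include hP

lemma integrable_of_bdd {f : E2 → ℝ} (hm : Measurable f) {C : ℝ}
    (hb : ∀ x ∈ unitSq, |f x| ≤ C) : Integrable f P := by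
  refine ⟨hm.aestronglyMeasurable, HasFiniteIntegral.of_bounded (C := C) ?_⟩
  filter_upwards [ae_unitSq hP] with x hx
  simpa using hb x hx

lemma integrable_coord (i : Fin 2) : Integrable (fun x : E2 => x i) P := by
  refine integrable_of_bdd hP (by fun_prop : Measurable fun x : E2 => x i) (C := 1) ?_
  intro x hx
  have := hx i
  rw [Set.mem_Icc] at this
  rw [abs_le]; constructor <;> linarith

lemma integrable_coord_sq (i : Fin 2) : Integrable (fun x : E2 => x i ^ 2) P := by
  refine integrable_of_bdd hP (by fun_prop : Measurable fun x : E2 => x i ^ 2) (C := 1) ?_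
  intro x hx
  have := hx i
  rw [Set.mem_Icc] at this
  rw [abs_le]; constructor <;> nlinarith

lemma integrable_affine_sq (i : Fin 2) (a b : ℝ) :
    Integrable (fun x : E2 => (a * x i + b) ^ 2) P := by
  have h : (fun x : E2 => (a * x i + b) ^ 2)
      = fun x : E2 => a ^ 2 * x i ^ 2 + (2 * a * b * x i + b ^ 2) := by
    funext x; ring
  rw [h]
  exact (((integrable_coord_sq hP i).const_mul _).add
    (((integrable_coord hP i).const_mul _).add (integrable_const _)))

lemma integrable_quad (a b c d : ℝ) :
    Integrable (fun x : E2 => (a * x 0 + b) ^ 2 + (c * x 1 + d) ^ 2) P :=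
  (integrable_affine_sq hP 0 a b).add (integrable_affine_sq hP 1 c d)

/-- linear integral -/
lemma intlin (i : Fin 2) (a b : ℝ) :
    ∫ x, (a * x i + b) ∂P = a * (∫ x, x i ∂P) + b := by
  have h1 : Integrable (fun x : E2 => a * x i) P := (integrable_coord hP i).const_mul a
  rw [integral_add h1 (integrable_const b), integral_const_mul, integral_const]
  simp

/-- quadratic integral -/
lemma intsq (i : Fin 2) (a b : ℝ) :
    ∫ x, (a * x i + b) ^ 2 ∂P
      = a ^ 2 * (∫ x, x i ^ 2 ∂P) + 2 * a * b * (∫ x, x i ∂P) + b ^ 2 := by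
  have h : (fun x : E2 => (a * x i + b) ^ 2)
      = fun x : E2 => a ^ 2 * x i ^ 2 + (2 * a * b * x i + b ^ 2) := by
    funext x; ring
  have h1 : Integrable (fun x : E2 => a ^ 2 * x i ^ 2) P :=
    (integrable_coord_sq hP i).const_mul _
  have h2 : Integrable (fun x : E2 => 2 * a * b * x i + b ^ 2) P := by
    have := ((integrable_coord hP i).const_mul (2 * a * b)).add (integrable_const (b ^ 2))
    exact this
  have h3 : Integrable (fun x : E2 => 2 * a * b * x i) P :=
    (integrable_coord hP i).const_mul _
  rw [h, integral_add h1 h2, integral_add h3 (integrable_const _),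
    integral_const_mul, integral_const_mul, integral_const]
  simp [add_assoc]

/-- self-similarity of integrals -/
lemma int_self_sim {f : E2 → ℝ} (hm : Measurable f) {C : ℝ}
    (hb : ∀ x ∈ unitSq, |f x| ≤ C) :
    ∫ x, f x ∂P = (1/8) * (∫ x, f (S 0 x) ∂P) + (1/8) * (∫ x, f (S 1 x) ∂P)
      + (3/8) * (∫ x, f (S 2 x) ∂P) + (3/8) * (∫ x, f (S 3 x) ∂P) := by
  have hint : ∀ j : Fin 4, Integrable f (P.map (S j)) := by
    intro j
    refine (integrable_map_measure hm.aestronglyMeasurable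
      (measurable_S j).aemeasurable).mpr ?_
    refine integrable_of_bdd hP (hm.comp (measurable_S j)) (C := C) fun x hx => ?_
    exact hb _ (S_maps_unitSq j hx)
  have himap : ∀ j : Fin 4, ∫ x, f x ∂(P.map (S j)) = ∫ x, f (S j x) ∂P := fun j =>
    integral_map (measurable_S j).aemeasurable
      (hm.aestronglyMeasurable.mono_ac (Measure.absolutelyContinuous_refl _))
  have h18 : ((1:ℝ≥0∞)/8) ≠ ⊤ := (ENNReal.div_lt_top (by norm_num) (by norm_num)).ne
  have h38 : ((3:ℝ≥0∞)/8) ≠ ⊤ := (ENNReal.div_lt_top (by norm_num) (by norm_num)).ne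
  have I0 : Integrable f ((1/8 : ℝ≥0∞) • P.map (S 0)) := (hint 0).smul_measure h18
  have I1 : Integrable f ((1/8 : ℝ≥0∞) • P.map (S 1)) := (hint 1).smul_measure h18
  have I2 : Integrable f ((3/8 : ℝ≥0∞) • P.map (S 2)) := (hint 2).smul_measure h38
  have I3 : Integrable f ((3/8 : ℝ≥0∞) • P.map (S 3)) := (hint 3).smul_measure h38
  conv_lhs => rw [hP]
  rw [integral_add_measure ((I0.add_measure I1).add_measure I2) I3,
    integral_add_measure (I0.add_measure I1) I2, integral_add_measure I0 I1,
    integral_smul_measure, integral_smul_measure, integral_smul_measure,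
    integral_smul_measure, himap 0, himap 1, himap 2, himap 3]
  norm_num [smul_eq_mul, ENNReal.toReal_div]

lemma M0 : ∫ x, x 0 ∂P = 1/2 := by
  have h := int_self_sim hP (f := fun x => x 0)
    (by fun_prop : Measurable fun x : E2 => x 0) (C := 1)
    (fun x hx => by have := hx 0; rw [Set.mem_Icc] at this; rw [abs_le]; constructor <;> linarith)
  have hc : ∀ j : Fin 4, ∫ x, S j x 0 ∂P = (1/3) * (∫ x, x 0 ∂P) + vS j 0 := by
    intro j
    have : (fun x : E2 => S j x 0) = fun x : E2 => (1/3) * x 0 + vS j 0 := by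
      funext x; rw [S_apply_coord]; ring
    rw [this, intlin hP]
  rw [hc 0, hc 1, hc 2, hc 3] at h
  simp only [vS, Matrix.cons_val_zero, Matrix.cons_val_one, Matrix.head_cons, Matrix.cons_val] at h
  norm_num at h
  linarith

lemma M1 : ∫ x, x 1 ∂P = 3/4 := by
  have h := int_self_sim hP (f := fun x => x 1)
    (by fun_prop : Measurable fun x : E2 => x 1) (C := 1)
    (fun x hx => by have := hx 1; rw [Set.mem_Icc] at this; rw [abs_le]; constructor <;> linarith)
  have hc : ∀ j : Fin 4, ∫ x, S j x 1 ∂P = (1/3) * (∫ x, x 1 ∂P) + vS j 1 := by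
    intro j
    have : (fun x : E2 => S j x 1) = fun x : E2 => (1/3) * x 1 + vS j 1 := by
      funext x; rw [S_apply_coord]; ring
    rw [this, intlin hP]
  rw [hc 0, hc 1, hc 2, hc 3] at h
  simp only [vS, Matrix.cons_val] at h
  norm_num at h
  linarith

lemma Q0 : ∫ x, x 0 ^ 2 ∂P = 3/8 := by
  have h := int_self_sim hP (f := fun x => x 0 ^ 2)
    (by fun_prop : Measurable fun x : E2 => x 0 ^ 2) (C := 1)
    (fun x hx => by
      show |x 0 ^ 2| ≤ 1
      have := hx 0; rw [Set.mem_Icc] at this; rw [abs_le]; constructor <;> nlinarith)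
  have hc : ∀ j : Fin 4, ∫ x, S j x 0 ^ 2 ∂P
      = (1/3) ^ 2 * (∫ x, x 0 ^ 2 ∂P) + 2 * (1/3) * vS j 0 * (∫ x, x 0 ∂P) + vS j 0 ^ 2 := by
    intro j
    have : (fun x : E2 => S j x 0 ^ 2) = fun x : E2 => ((1/3) * x 0 + vS j 0) ^ 2 := by
      funext x; rw [S_apply_coord]; ring_nf
    rw [this, intsq hP]
  rw [hc 0, hc 1, hc 2, hc 3, M0 hP] at h
  simp only [vS, Matrix.cons_val] at h
  norm_num at h
  linarith

lemma Q1 : ∫ x, x 1 ^ 2 ∂P = 21/32 := by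
  have h := int_self_sim hP (f := fun x => x 1 ^ 2)
    (by fun_prop : Measurable fun x : E2 => x 1 ^ 2) (C := 1)
    (fun x hx => by
      show |x 1 ^ 2| ≤ 1
      have := hx 1; rw [Set.mem_Icc] at this; rw [abs_le]; constructor <;> nlinarith)
  have hc : ∀ j : Fin 4, ∫ x, S j x 1 ^ 2 ∂P
      = (1/3) ^ 2 * (∫ x, x 1 ^ 2 ∂P) + 2 * (1/3) * vS j 1 * (∫ x, x 1 ∂P) + vS j 1 ^ 2 := by
    intro j
    have : (fun x : E2 => S j x 1 ^ 2) = fun x : E2 => ((1/3) * x 1 + vS j 1) ^ 2 := by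
      funext x; rw [S_apply_coord]; ring_nf
    rw [this, intsq hP]
  rw [hc 0, hc 1, hc 2, hc 3, M1 hP] at h
  simp only [vS, Matrix.cons_val] at h
  norm_num at h
  linarith

/-- the master quadratic integral -/
lemma int_quad (a b c d : ℝ) :
    ∫ x, ((a * x 0 + b) ^ 2 + (c * x 1 + d) ^ 2) ∂P
      = (a ^ 2 * (3/8) + 2 * a * b * (1/2) + b ^ 2)
        + (c ^ 2 * (21/32) + 2 * c * d * (3/4) + d ^ 2) := by
  rw [integral_add (integrable_affine_sq hP 0 a b) (integrable_affine_sq hP 1 c d),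
    intsq hP, intsq hP, M0 hP, M1 hP, Q0 hP, Q1 hP]

end Moments
/-- product of weights over a word -/
def prodw (w : List (Fin 4)) : ℝ≥0∞ := (w.map pr).prod

@[simp] lemma prodw_nil : prodw [] = 1 := rfl
lemma prodw_cons (a : Fin 4) (w : List (Fin 4)) : prodw (a :: w) = pr a * prodw w := by
  unfold prodw; simp

lemma pr_ne_top (i : Fin 4) : pr i ≠ ⊤ := by
  fin_cases i <;> exact (ENNReal.div_lt_top (by norm_num) (by norm_num)).ne

lemma pr_ne_zero (i : Fin 4) : pr i ≠ 0 := by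
  fin_cases i <;> simp [pr]

lemma prodw_ne_top (w : List (Fin 4)) : prodw w ≠ ⊤ := by
  induction w with
  | nil => simp
  | cons a w ih => rw [prodw_cons]; exact ENNReal.mul_ne_top (pr_ne_top a) ih

lemma prodw_ne_zero (w : List (Fin 4)) : prodw w ≠ 0 := by
  induction w with
  | nil => simp
  | cons a w ih => rw [prodw_cons]; exact mul_ne_zero (pr_ne_zero a) ih

lemma prodw_toReal_pos (w : List (Fin 4)) : 0 < (prodw w).toReal :=
  ENNReal.toReal_pos (prodw_ne_zero w) (prodw_ne_top w)

section Restrict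

variable {P : Measure E2} [IsProbabilityMeasure P] (hP : carpetEq P)
include hP

lemma measEq' {A : Set E2} (hA : MeasurableSet A) :
    P A = ∑ j : Fin 4, pr j * P (S j ⁻¹' A) := by
  rw [measEq hP hA, Fin.sum_univ_four]

lemma measure_unitSq : P unitSq = 1 :=
  (prob_compl_eq_zero_iff measurableSet_unitSq).mp (unitSq_compl_null hP)

lemma restrict_S_image (i : Fin 4) {B : Set E2} (hB : MeasurableSet B)
    (hBs : B ⊆ unitSq) :
    P.restrict (S i '' B) = pr i • ((P.restrict B).map (S i)) := by
  ext A hA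
  have hSB : MeasurableSet (S i '' B) := measurableSet_S_image i hB
  rw [Measure.restrict_apply hA, measEq' hP (hA.inter hSB)]
  have hnull : ∀ j : Fin 4, j ≠ i → P (S j ⁻¹' (A ∩ S i '' B)) = 0 := by
    intro j hj
    refine measure_mono_null ?_ (unitSq_compl_null hP)
    intro x hx
    simp only [Set.mem_preimage, Set.mem_inter_iff] at hx
    obtain ⟨y, hy, hxy⟩ := hx.2
    intro hxu
    exact S_disjoint hj.symm (hBs hy) hxu hxy
  have hkey : S i ⁻¹' (A ∩ S i '' B) = S i ⁻¹' A ∩ B := by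
    rw [Set.preimage_inter, Set.preimage_image_eq B (S_injective i)]
  have heval : ∀ j : Fin 4, j ≠ i → pr j * P (S j ⁻¹' (A ∩ S i '' B)) = 0 := by
    intro j hj; rw [hnull j hj, mul_zero]
  have hrhs : (pr i • ((P.restrict B).map (S i))) A
      = pr i * P (S i ⁻¹' A ∩ B) := by
    rw [Measure.smul_apply, smul_eq_mul,
      Measure.map_apply (measurable_S i) hA, Measure.restrict_apply ((measurable_S i) hA)]
  rw [hrhs, Finset.sum_eq_single i (fun j _ hj => heval j hj) (by simp), hkey]

lemma restrict_Sw_image (w : List (Fin 4)) {B : Set E2} (hB : MeasurableSet B)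
    (hBs : B ⊆ unitSq) :
    P.restrict (Sw w '' B) = prodw w • ((P.restrict B).map (Sw w)) := by
  induction w with
  | nil =>
    simp only [prodw_nil, one_smul]
    rw [show Sw [] '' B = B from by ext y; simp]
    rw [Measure.map_congr (by rfl)]
    exact (Measure.map_id).symm
  | cons a w ih =>
    have himg : Sw (a :: w) '' B = S a '' (Sw w '' B) := by
      rw [← Set.image_comp]; rfl
    rw [himg, restrict_S_image hP a (measurableSet_Sw_image w hB) (Sw_image_subset w hBs),
      ih, Measure.map_smul, Measure.map_map (measurable_S a) (measurable_Sw w),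
      smul_smul, prodw_cons]
    rfl

lemma measure_S_image (i : Fin 4) {B : Set E2} (hB : MeasurableSet B) (hBs : B ⊆ unitSq) :
    P (S i '' B) = pr i * P B := by
  have h := congrArg (fun μ : Measure E2 => μ Set.univ)
    (restrict_S_image hP i hB hBs)
  simpa [Measure.restrict_apply_univ, Measure.map_apply (measurable_S i) MeasurableSet.univ]
    using h

lemma measure_Jset (i : Fin 4) : P (Jset i) = pr i := by
  rw [Jset, measure_S_image hP i measurableSet_unitSq (le_refl _),
    measure_unitSq hP, mul_one]

/-- set integral over an image under Sw -/
lemma setInt_Sw (w : List (Fin 4)) {B : Set E2} (hB : MeasurableSet B)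
    (hBs : B ⊆ unitSq) {f : E2 → ℝ} (hf : Continuous f) :
    ∫ x in Sw w '' B, f x ∂P = (prodw w).toReal * ∫ x in B, f (Sw w x) ∂P := by
  rw [restrict_Sw_image hP w hB hBs, integral_smul_measure,
    integral_map (measurable_Sw w).aemeasurable hf.aestronglyMeasurable, smul_eq_mul]

/-- set integral over Jset i -/
lemma setInt_Jset (i : Fin 4) {f : E2 → ℝ} (hf : Continuous f) :
    ∫ x in Jset i, f x ∂P = (pr i).toReal * ∫ x, f (S i x) ∂P := by
  have h := setInt_Sw hP (w := i :: List.nil) measurableSet_unitSq (le_refl _) hf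
  have h1 : Sw [i] '' unitSq = Jset i := rfl
  rw [h1] at h
  rw [h, restrict_unitSq hP]
  have hw : prodw [i] = pr i := by unfold prodw; simp
  rw [hw]
  rfl

end Restrict
lemma normsq_eq (y : E2) : ‖y‖^2 = y 0 ^ 2 + y 1 ^ 2 := by
  rw [EuclideanSpace.norm_eq, Real.sq_sqrt (by positivity)]
  rw [Fin.sum_univ_two, Real.norm_eq_abs, Real.norm_eq_abs, sq_abs, sq_abs]

lemma norm_le_two {x : E2} (hx : x ∈ unitSq) : ‖x‖ ≤ 2 := by
  have h0 := hx 0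
  have h1 := hx 1
  rw [Set.mem_Icc] at h0 h1
  nlinarith [normsq_eq x, norm_nonneg x]

lemma continuous_coord (k : Fin 2) : Continuous (fun x : E2 => x k) :=
  (EuclideanSpace.proj (𝕜 := ℝ) k).continuous

lemma pr_toReal_18 {i : Fin 4} (h : pr i = 1/8) : (pr i).toReal = 1/8 := by
  rw [h, ENNReal.toReal_div]
  norm_num

lemma pr_toReal_38 {i : Fin 4} (h : pr i = 3/8) : (pr i).toReal = 3/8 := by
  rw [h, ENNReal.toReal_div]
  norm_num

section Final

variable {P : Measure E2} [IsProbabilityMeasure P] (hP : carpetEq P)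
include hP

lemma integrable_id_restrict (B : Set E2) :
    Integrable (fun x : E2 => x) (P.restrict B) := by
  refine ⟨continuous_id.aestronglyMeasurable, HasFiniteIntegral.of_bounded (C := 2) ?_⟩
  filter_upwards [ae_restrict_of_ae (ae_unitSq hP)] with x hx
  exact norm_le_two hx

lemma measure_Sw_image (w : List (Fin 4)) {B : Set E2} (hB : MeasurableSet B)
    (hBs : B ⊆ unitSq) : P (Sw w '' B) = prodw w * P B := by
  have h := congrArg (fun μ : Measure E2 => μ Set.univ) (restrict_Sw_image hP w hB hBs)
  simpa [Measure.restrict_apply_univ,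
    Measure.map_apply (measurable_Sw w) MeasurableSet.univ] using h

lemma setInt_Sw_vec (w : List (Fin 4)) {B : Set E2} (hB : MeasurableSet B)
    (hBs : B ⊆ unitSq) {f : E2 → E2} (hf : Continuous f) :
    ∫ x in Sw w '' B, f x ∂P = (prodw w).toReal • ∫ x in B, f (Sw w x) ∂P := by
  rw [restrict_Sw_image hP w hB hBs, integral_smul_measure,
    integral_map (measurable_Sw w).aemeasurable hf.aestronglyMeasurable]

lemma int_normsq_c : ∫ x, ‖x - pt (1/2) (3/4)‖^2 ∂P = 7/32 := by
  have hg : ∀ x : E2, ‖x - pt (1/2) (3/4)‖^2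
      = (1 * x 0 + (-1/2 : ℝ))^2 + (1 * x 1 + (-3/4 : ℝ))^2 := by
    intro x
    rw [normsq_eq (x - pt (1/2) (3/4)), PiLp.sub_apply, PiLp.sub_apply,
      pt_apply_0, pt_apply_1]
    ring
  simp only [hg]
  rw [int_quad hP]
  norm_num

lemma Err_eq (w : List (Fin 4)) :
    Err P w = (prodw w).toReal * (rwS w ^ 2 * (7/32)) := by
  unfold Err Jw
  rw [setInt_Sw hP w measurableSet_unitSq (le_refl _)
    (by exact (continuous_id.sub continuous_const).norm.pow 2 :
      Continuous fun x : E2 => ‖x - Sw w (pt (1/2) (3/4))‖^2)]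
  congr 1
  simp only [Sw_normsq_sub]
  rw [integral_const_mul, restrict_unitSq hP, int_normsq_c hP]

set_option maxHeartbeats 1000000 in
lemma pair_calc (w : List (Fin 4)) (i j : Fin 4) (hij : i ≠ j)
    (hpi : pr i = 1/8) (hpj : pr j = 3/8)
    (hvi1 : vS i 1 = 0) (hvj1 : vS j 1 = 2/3) (hv0 : vS j 0 = vS i 0) :
    Epair P w i j = (prodw w).toReal * (rwS w ^ 2 * (31/576)) := by
  set t := vS i 0 with ht
  set b : E2 := pt (t + 1/6) (3/4) with hb
  set U : Set E2 := Jset i ∪ Jset j with hU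
  have hdisj : Disjoint (Jset i) (Jset j) := by
    rw [Set.disjoint_left]
    rintro x ⟨y, hy, rfl⟩ ⟨z, hz, hzx⟩
    exact S_disjoint hij hy hz hzx.symm
  have hUm : MeasurableSet U := (measurableSet_Jset i).union (measurableSet_Jset j)
  have hUs : U ⊆ unitSq := by
    rintro x (⟨y, hy, rfl⟩ | ⟨y, hy, rfl⟩) <;> exact S_maps_unitSq _ hy
  have hA : Jw (w ++ [i]) ∪ Jw (w ++ [j]) = Sw w '' U := by
    rw [Jw_append, Jw_append, hU, Set.image_union]
  -- measure of U and A
  have hPU : (P U).toReal = 1/2 := by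
    rw [hU, measure_union hdisj (measurableSet_Jset j), measure_Jset hP i,
      measure_Jset hP j, ENNReal.toReal_add (by rw [hpi]; exact
        (ENNReal.div_lt_top (by norm_num) (by norm_num)).ne)
        (by rw [hpj]; exact (ENNReal.div_lt_top (by norm_num) (by norm_num)).ne),
      pr_toReal_18 hpi, pr_toReal_38 hpj]
    norm_num
  have hPA : (P (Sw w '' U)).toReal = (prodw w).toReal * (1/2) := by
    rw [measure_Sw_image hP w hUm hUs, ENNReal.toReal_mul, hPU]
  -- coordinate integrals over U
  have hSint : ∀ (k : Fin 4) (m : Fin 2), ∫ x, S k x m ∂P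
      = 1/3 * (∫ x, x m ∂P) + vS k m := by
    intro k m
    have : (fun x : E2 => S k x m) = fun x : E2 => 1/3 * x m + vS k m := by
      funext x; rw [S_apply_coord]; ring
    rw [this, intlin hP]
  have hIU0 : ∫ x in U, x 0 ∂P = 1/2 * (t + 1/6) := by
    rw [hU, setIntegral_union hdisj (measurableSet_Jset j)
      (integrable_coord hP 0).integrableOn (integrable_coord hP 0).integrableOn,
      setInt_Jset hP i (continuous_coord 0), setInt_Jset hP j (continuous_coord 0)]
    have h1 : ∫ x, S i x 0 ∂P = 1/3 * (1/2) + t := by rw [hSint i 0, M0 hP, ht]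
    have h2 : ∫ x, S j x 0 ∂P = 1/3 * (1/2) + t := by rw [hSint j 0, M0 hP, hv0, ht]
    rw [h1, h2, pr_toReal_18 hpi, pr_toReal_38 hpj]
    ring
  have hIU1 : ∫ x in U, x 1 ∂P = 3/8 := by
    rw [hU, setIntegral_union hdisj (measurableSet_Jset j)
      (integrable_coord hP 1).integrableOn (integrable_coord hP 1).integrableOn,
      setInt_Jset hP i (continuous_coord 1), setInt_Jset hP j (continuous_coord 1)]
    have h1 : ∫ x, S i x 1 ∂P = 1/3 * (3/4) + 0 := by rw [hSint i 1, M1 hP, hvi1]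
    have h2 : ∫ x, S j x 1 ∂P = 1/3 * (3/4) + 2/3 := by rw [hSint j 1, M1 hP, hvj1]
    rw [h1, h2, pr_toReal_18 hpi, pr_toReal_38 hpj]
    ring
  -- vector integral over U
  have hmU : ∫ x in U, x ∂P = (1/2 : ℝ) • b := by
    have e0 : (∫ x in U, (x : E2) ∂P) 0 = ∫ x in U, x 0 ∂P :=
      (ContinuousLinearMap.integral_comp_comm (EuclideanSpace.proj (0 : Fin 2))
        (integrable_id_restrict hP U)).symm
    have e1 : (∫ x in U, (x : E2) ∂P) 1 = ∫ x in U, x 1 ∂P :=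
      (ContinuousLinearMap.integral_comp_comm (EuclideanSpace.proj (1 : Fin 2))
        (integrable_id_restrict hP U)).symm
    refine E2_ext ?_ ?_
    · rw [e0, hIU0, PiLp.smul_apply, hb, pt_apply_0, smul_eq_mul]
    · rw [e1, hIU1, PiLp.smul_apply, hb, pt_apply_1, smul_eq_mul]
      norm_num
  -- centroid
  have hctr : ctr P (Sw w '' U) = Sw w b := by
    unfold ctr
    have hvec : ∫ x in Sw w '' U, x ∂P
        = (prodw w).toReal • (rwS w • ((1/2 : ℝ) • b) + (1/2 : ℝ) • Sw w 0) := by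
      rw [setInt_Sw_vec hP w hUm hUs (continuous_id' : Continuous fun x : E2 => x)]
      congr 1
      rw [show (∫ x in U, Sw w x ∂P) = ∫ x in U, (rwS w • x + Sw w 0) ∂P from
        integral_congr_ae (Filter.Eventually.of_forall fun x => Sw_affine w x)]
      have hint1 : Integrable (fun x : E2 => rwS w • x) (P.restrict U) := by
        have h := (integrable_id_restrict hP U).smul (rwS w)
        exact h
      rw [integral_add hint1 (integrable_const _),
        integral_smul, hmU, integral_const, measureReal_restrict_apply_univ]
      congr 1
      rw [← hPU]; rfl
    have hpw : (prodw w).toReal ≠ 0 := (prodw_toReal_pos w).ne'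
    rw [hvec, hPA, Sw_affine w b]
    simp only [smul_add, smul_smul]
    congr 1
    · congr 1
      field_simp
    · nth_rewrite 2 [← one_smul ℝ (Sw w 0)]
      congr 1
      field_simp
  -- main integral
  unfold Epair
  rw [hA, hctr]
  rw [setInt_Sw hP w hUm hUs
    (by exact (continuous_id.sub continuous_const).norm.pow 2 :
      Continuous fun x : E2 => ‖x - Sw w b‖^2)]
  congr 1
  simp only [Sw_normsq_sub]
  rw [integral_const_mul]
  congr 1
  have hg : ∀ x : E2, ‖x - b‖^2
      = (1 * x 0 + (-t - 1/6))^2 + (1 * x 1 + (-3/4 : ℝ))^2 := by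
    intro x
    rw [normsq_eq (x - b), PiLp.sub_apply, PiLp.sub_apply, hb, pt_apply_0, pt_apply_1]
    ring
  simp only [hg]
  have hquadc : Continuous fun x : E2 => (1 * x 0 + (-t - 1/6))^2 + (1 * x 1 + (-3/4 : ℝ))^2 :=
    ((((continuous_const.mul (continuous_coord 0)).add continuous_const).pow 2).add
      (((continuous_const.mul (continuous_coord 1)).add continuous_const).pow 2))
  rw [hU, setIntegral_union hdisj (measurableSet_Jset j)
    (integrable_quad hP 1 (-t - 1/6) 1 (-3/4)).integrableOn
    (integrable_quad hP 1 (-t - 1/6) 1 (-3/4)).integrableOn,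
    setInt_Jset hP i hquadc, setInt_Jset hP j hquadc]
  have hcompi : ∀ x : E2, (1 * (S i x 0) + (-t - 1/6))^2 + (1 * (S i x 1) + (-3/4 : ℝ))^2
      = (1/3 * x 0 + (-1/6 : ℝ))^2 + (1/3 * x 1 + (-3/4 : ℝ))^2 := by
    intro x
    rw [S_apply_coord, S_apply_coord, ← ht, hvi1]
    ring
  have hcompj : ∀ x : E2, (1 * (S j x 0) + (-t - 1/6))^2 + (1 * (S j x 1) + (-3/4 : ℝ))^2
      = (1/3 * x 0 + (-1/6 : ℝ))^2 + (1/3 * x 1 + (-1/12 : ℝ))^2 := by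
    intro x
    rw [S_apply_coord, S_apply_coord, hvj1, show vS j 0 = t from hv0]
    ring
  simp only [hcompi, hcompj]
  rw [int_quad hP, int_quad hP, pr_toReal_18 hpi, pr_toReal_38 hpj]
  norm_num

end Final

theorem Epair_13_24 (P : Measure E2) [IsProbabilityMeasure P] (hP : carpetEq P)
    (w : List (Fin 4)) :
    Epair P w 0 2 = (31/126) * Err P w ∧ Epair P w 1 3 = (31/126) * Err P w := by
  constructor
  · rw [pair_calc hP w 0 2 (by decide) (by norm_num [pr]) (by rfl)
      (by norm_num [vS]) (by rfl) (by rfl), Err_eq hP w]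
    ring
  · rw [pair_calc hP w 1 3 (by decide) (by norm_num [pr]) (by rfl)
      (by norm_num [vS]) (by rfl) (by rfl), Err_eq hP w]
    ring
end
end
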